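/- Let k ≥ 2 be an integer. If the kernel K satisfies (M/m)^k − (m/M)^k < 1/k, then the system of equations (H_k f)(t) = g(t), (H_k g)(t) = f(t) for all t ∈ [0,1] has no solution (f,g) with f,g ∈ C₀⁺[0,1] and f ≠ g. -/

import Mathlib

open Set MeasureTheory

/-- The Hammerstein operator `(H_k f)(t) = ∫₀¹ K(t,u) f(u)^k du`. -/
noncomputable def Hk (K : ℝ → ℝ → ℝ) (k : ℕ) (f : ℝ → ℝ) (t : ℝ) : ℝ :=
  ∫ u in (0:ℝ)..1, K t u * f u ^ k

set_option maxHeartbeats 1000000 in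
theorem stmt_9
    (K : ℝ → ℝ → ℝ) (k : ℕ) (hk : 2 ≤ k)
    (hKcont : ContinuousOn (fun p : ℝ × ℝ => K p.1 p.2) (Icc 0 1 ×ˢ Icc 0 1))
    (hKpos : ∀ t ∈ Icc (0:ℝ) 1, ∀ u ∈ Icc (0:ℝ) 1, 0 < K t u)
    (M m : ℝ)
    (hM : IsGreatest ((fun p : ℝ × ℝ => K p.1 p.2) '' (Icc 0 1 ×ˢ Icc 0 1)) M)
    (hm : IsLeast ((fun p : ℝ × ℝ => K p.1 p.2) '' (Icc 0 1 ×ˢ Icc 0 1)) m)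
    (hcond : (M / m) ^ k - (m / M) ^ k < 1 / (k : ℝ)) :
    ¬ ∃ f g : ℝ → ℝ,
      ContinuousOn f (Icc 0 1) ∧ ContinuousOn g (Icc 0 1) ∧
      (∀ t ∈ Icc (0:ℝ) 1, 0 ≤ f t) ∧ (∀ t ∈ Icc (0:ℝ) 1, 0 ≤ g t) ∧
      (∃ t ∈ Icc (0:ℝ) 1, f t ≠ 0) ∧ (∃ t ∈ Icc (0:ℝ) 1, g t ≠ 0) ∧
      (∃ t ∈ Icc (0:ℝ) 1, f t ≠ g t) ∧
      (∀ t ∈ Icc (0:ℝ) 1, Hk K k f t = g t) ∧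
      (∀ t ∈ Icc (0:ℝ) 1, Hk K k g t = f t) := by
  rintro ⟨f, g, hfc, hgc, hf0, hg0, ⟨tf, htf, hftf⟩, ⟨tg, htg, hgtg⟩, ⟨td, htd, hfgne⟩, hHf, hHg⟩
  obtain ⟨j, rfl⟩ : ∃ j, k = j + 2 := ⟨k - 2, by omega⟩
  have h01 : (0:ℝ) ≤ 1 := by norm_num
  -- kernel bounds
  have hKub : ∀ t ∈ Icc (0:ℝ) 1, ∀ s ∈ Icc (0:ℝ) 1, K t s ≤ M := fun t ht s hs =>
    hM.2 ⟨(t, s), mk_mem_prod ht hs, rfl⟩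
  have hKlb : ∀ t ∈ Icc (0:ℝ) 1, ∀ s ∈ Icc (0:ℝ) 1, m ≤ K t s := fun t ht s hs =>
    hm.2 ⟨(t, s), mk_mem_prod ht hs, rfl⟩
  have hmpos : 0 < m := by
    obtain ⟨p, hp, hpe⟩ := hm.1
    exact hpe ▸ hKpos p.1 hp.1 p.2 hp.2
  have hmM : m ≤ M := by
    obtain ⟨p, hp, hpe⟩ := hm.1
    exact hpe ▸ hKub p.1 hp.1 p.2 hp.2
  have hMpos : 0 < M := lt_of_lt_of_le hmpos hmM
  -- continuity of kernel sections
  have hKt : ∀ t ∈ Icc (0:ℝ) 1, ContinuousOn (fun s => K t s) (Icc 0 1) := by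
    intro t ht
    exact hKcont.comp ((continuous_const.prodMk continuous_id).continuousOn)
      (fun s hs => mk_mem_prod ht hs)
  -- integrability helper
  have hInt : ∀ F : ℝ → ℝ, ContinuousOn F (Icc 0 1) → IntervalIntegrable F volume 0 1 := by
    intro F hF
    apply ContinuousOn.intervalIntegrable
    rwa [Set.uIcc_of_le h01]
  have hfck : ContinuousOn (fun s => f s ^ (j+2)) (Icc (0:ℝ) 1) := hfc.pow _
  have hgck : ContinuousOn (fun s => g s ^ (j+2)) (Icc (0:ℝ) 1) := hgc.pow _
  set A := ∫ s in (0:ℝ)..1, f s ^ (j+2) with hAdef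
  set B := ∫ s in (0:ℝ)..1, g s ^ (j+2) with hBdef
  -- pointwise bounds for f and g
  have hgub : ∀ t ∈ Icc (0:ℝ) 1, g t ≤ M * A := by
    intro t ht
    rw [← hHf t ht]
    have : (∫ s in (0:ℝ)..1, K t s * f s ^ (j+2)) ≤ ∫ s in (0:ℝ)..1, M * f s ^ (j+2) := by
      apply intervalIntegral.integral_mono_on h01
        (hInt _ ((hKt t ht).mul hfck)) (hInt _ (continuousOn_const.mul hfck))
      intro s hs
      exact mul_le_mul_of_nonneg_right (hKub t ht s hs) (pow_nonneg (hf0 s hs) _)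
    calc Hk K (j+2) f t ≤ ∫ s in (0:ℝ)..1, M * f s ^ (j+2) := this
      _ = M * A := by rw [intervalIntegral.integral_const_mul]
  have hglb : ∀ t ∈ Icc (0:ℝ) 1, m * A ≤ g t := by
    intro t ht
    rw [← hHf t ht]
    have : (∫ s in (0:ℝ)..1, m * f s ^ (j+2)) ≤ ∫ s in (0:ℝ)..1, K t s * f s ^ (j+2) := by
      apply intervalIntegral.integral_mono_on h01
        (hInt _ (continuousOn_const.mul hfck)) (hInt _ ((hKt t ht).mul hfck))
      intro s hs
      exact mul_le_mul_of_nonneg_right (hKlb t ht s hs) (pow_nonneg (hf0 s hs) _)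
    calc m * A = ∫ s in (0:ℝ)..1, m * f s ^ (j+2) := by rw [intervalIntegral.integral_const_mul]
      _ ≤ Hk K (j+2) f t := this
  have hfub : ∀ t ∈ Icc (0:ℝ) 1, f t ≤ M * B := by
    intro t ht
    rw [← hHg t ht]
    have : (∫ s in (0:ℝ)..1, K t s * g s ^ (j+2)) ≤ ∫ s in (0:ℝ)..1, M * g s ^ (j+2) := by
      apply intervalIntegral.integral_mono_on h01
        (hInt _ ((hKt t ht).mul hgck)) (hInt _ (continuousOn_const.mul hgck))
      intro s hs
      exact mul_le_mul_of_nonneg_right (hKub t ht s hs) (pow_nonneg (hg0 s hs) _)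
    calc Hk K (j+2) g t ≤ ∫ s in (0:ℝ)..1, M * g s ^ (j+2) := this
      _ = M * B := by rw [intervalIntegral.integral_const_mul]
  have hflb : ∀ t ∈ Icc (0:ℝ) 1, m * B ≤ f t := by
    intro t ht
    rw [← hHg t ht]
    have : (∫ s in (0:ℝ)..1, m * g s ^ (j+2)) ≤ ∫ s in (0:ℝ)..1, K t s * g s ^ (j+2) := by
      apply intervalIntegral.integral_mono_on h01
        (hInt _ (continuousOn_const.mul hgck)) (hInt _ ((hKt t ht).mul hgck))
      intro s hs
      exact mul_le_mul_of_nonneg_right (hKlb t ht s hs) (pow_nonneg (hg0 s hs) _)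
    calc m * B = ∫ s in (0:ℝ)..1, m * g s ^ (j+2) := by rw [intervalIntegral.integral_const_mul]
      _ ≤ Hk K (j+2) g t := this
  -- positivity of A and B
  have hApos : 0 < A := by
    have hgtgpos : 0 < g tg := lt_of_le_of_ne (hg0 tg htg) (Ne.symm hgtg)
    have := hgub tg htg
    nlinarith
  have hBpos : 0 < B := by
    have hftfpos : 0 < f tf := lt_of_le_of_ne (hf0 tf htf) (Ne.symm hftf)
    have := hfub tf htf
    nlinarith
  -- lower bounds on A, B
  have hA1 : (m * B) ^ (j+2) ≤ A := by
    have : (∫ _ in (0:ℝ)..1, (m*B) ^ (j+2)) ≤ ∫ s in (0:ℝ)..1, f s ^ (j+2) := by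
      apply intervalIntegral.integral_mono_on h01 intervalIntegrable_const (hInt _ hfck)
      intro s hs
      exact pow_le_pow_left₀ (by positivity) (hflb s hs) _
    simpa using this
  have hB1 : (m * A) ^ (j+2) ≤ B := by
    have : (∫ _ in (0:ℝ)..1, (m*A) ^ (j+2)) ≤ ∫ s in (0:ℝ)..1, g s ^ (j+2) := by
      apply intervalIntegral.integral_mono_on h01 intervalIntegrable_const (hInt _ hgck)
      intro s hs
      exact pow_le_pow_left₀ (by positivity) (hglb s hs) _
    simpa using this
  -- crucial smallness : m^(j+2) * X^(j+1) ≤ 1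
  have hkey : ∀ X Y : ℝ, 0 < X → 0 < Y → (m * Y) ^ (j+2) ≤ X → (m * X) ^ (j+2) ≤ Y →
      m ^ (j+2) * X ^ (j+1) ≤ 1 := by
    intro X Y hX hY h1 h2
    have h3 : (m * (m*X)^(j+2))^(j+2) ≤ X := by
      refine le_trans (pow_le_pow_left₀ (by positivity) ?_ _) h1
      exact mul_le_mul_of_nonneg_left h2 hmpos.le
    have h4 : (m^(j+2) * X^(j+1))^(j+3) * X ≤ 1 * X := by
      calc (m^(j+2) * X^(j+1))^(j+3) * X = (m * (m*X)^(j+2))^(j+2) := by ring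
        _ ≤ X := h3
        _ = 1 * X := (one_mul X).symm
    have h5 : (m^(j+2) * X^(j+1))^(j+3) ≤ 1 := le_of_mul_le_mul_right h4 hX
    exact (pow_le_one_iff_of_nonneg (by positivity) (by omega)).mp h5
  have hAx : m ^ (j+2) * A ^ (j+1) ≤ 1 := hkey A B hApos hBpos hA1 hB1
  have hBx : m ^ (j+2) * B ^ (j+1) ≤ 1 := hkey B A hBpos hApos hB1 hA1
  clear_value A B
  set C := max A B with hCdef
  have hCpos : 0 < C := lt_max_of_lt_left hApos
  have hCx : m ^ (j+2) * C ^ (j+1) ≤ 1 := by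
    rcases max_cases A B with ⟨h, _⟩ | ⟨h, _⟩ <;> rw [hCdef, h] <;> assumption
  clear_value C
  -- the weight function
  set w : ℝ → ℝ := fun s => ∑ i ∈ Finset.range (j+2), f s ^ i * g s ^ (j + 2 - 1 - i) with hwdef
  have hwc : ContinuousOn w (Icc (0:ℝ) 1) := by
    apply continuousOn_finset_sum
    intro i _
    exact (hfc.pow i).mul (hgc.pow _)
  have hwnn : ∀ s ∈ Icc (0:ℝ) 1, 0 ≤ w s := by
    intro s hs
    apply Finset.sum_nonneg
    intro i _
    exact mul_nonneg (pow_nonneg (hf0 s hs) _) (pow_nonneg (hg0 s hs) _)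
  have hwub : ∀ s ∈ Icc (0:ℝ) 1, w s ≤ ((j:ℝ)+2) * (M*C)^(j+1) := by
    intro s hs
    have hMC : 0 ≤ M * C := by positivity
    have hterm : ∀ i ∈ Finset.range (j+2), f s ^ i * g s ^ (j + 2 - 1 - i) ≤ (M*C)^(j+1) := by
      intro i hi
      have hfle : f s ≤ M * C := le_trans (hfub s hs) (by
        have : B ≤ C := hCdef ▸ le_max_right A B
        nlinarith)
      have hgle : g s ≤ M * C := le_trans (hgub s hs) (by
        have : A ≤ C := hCdef ▸ le_max_left A B
        nlinarith)
      calc f s ^ i * g s ^ (j + 2 - 1 - i) ≤ (M*C)^i * (M*C)^(j + 2 - 1 - i) := by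
            apply mul_le_mul (pow_le_pow_left₀ (hf0 s hs) hfle _)
              (pow_le_pow_left₀ (hg0 s hs) hgle _) (pow_nonneg (hg0 s hs) _)
              (pow_nonneg hMC _)
        _ = (M*C)^(i + (j + 2 - 1 - i)) := (pow_add _ _ _).symm
        _ = (M*C)^(j+1) := by
            congr 1
            have := Finset.mem_range.mp hi
            omega
    calc w s ≤ (Finset.range (j+2)).card • ((M*C)^(j+1)) :=
          Finset.sum_le_card_nsmul _ _ _ hterm
      _ = ((j:ℝ)+2) * (M*C)^(j+1) := by
          simp [nsmul_eq_mul]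
  -- integral identity for the difference
  have hwuc : ContinuousOn (fun s => w s * (f s - g s)) (Icc (0:ℝ) 1) := hwc.mul (hfc.sub hgc)
  have hu : ∀ t ∈ Icc (0:ℝ) 1, f t - g t
      = -∫ s in (0:ℝ)..1, K t s * (w s * (f s - g s)) := by
    intro t ht
    have h2 := hHg t ht
    have h1 := hHf t ht
    unfold Hk at h1 h2
    have hsub : f t - g t
        = ∫ s in (0:ℝ)..1, (K t s * g s ^ (j+2) - K t s * f s ^ (j+2)) := by
      rw [intervalIntegral.integral_sub (hInt (fun s => K t s * g s ^ (j+2)) ((hKt t ht).mul hgck))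
        (hInt (fun s => K t s * f s ^ (j+2)) ((hKt t ht).mul hfck)), h1, h2]
    rw [hsub, ← intervalIntegral.integral_neg]
    apply intervalIntegral.integral_congr
    intro s _
    simp only [hwdef]
    linear_combination (K t s) * geom_sum₂_mul (f s) (g s) (j+2)
  -- max and min of the difference
  obtain ⟨t1, ht1, hmax⟩ := isCompact_Icc.exists_isMaxOn (α := ℝ)
    (s := Icc (0:ℝ) 1) ⟨0, by norm_num⟩ (hfc.sub hgc)
  obtain ⟨t2, ht2, hmin⟩ := isCompact_Icc.exists_isMinOn (α := ℝ)
    (s := Icc (0:ℝ) 1) ⟨0, by norm_num⟩ (hfc.sub hgc)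
  have hmax' : ∀ s ∈ Icc (0:ℝ) 1, f s - g s ≤ f t1 - g t1 := fun s hs => hmax hs
  have hmin' : ∀ s ∈ Icc (0:ℝ) 1, f t2 - g t2 ≤ f s - g s := fun s hs => hmin hs
  -- the difference takes both signs
  have hDpos : 0 < f t1 - g t1 := by
    by_contra h
    push_neg at h
    have hall : ∀ s ∈ Icc (0:ℝ) 1, f s - g s ≤ 0 := fun s hs => le_trans (hmax' s hs) h
    have h0 : 0 ≤ ∫ s in (0:ℝ)..1, -(K td s * (w s * (f s - g s))) := by
      apply intervalIntegral.integral_nonneg h01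
      intro s hs
      have hx1 : w s * (f s - g s) ≤ 0 :=
        mul_nonpos_of_nonneg_of_nonpos (hwnn s hs) (hall s hs)
      have hx2 : K td s * (w s * (f s - g s)) ≤ 0 :=
        mul_nonpos_of_nonneg_of_nonpos (hKpos td htd s hs).le hx1
      linarith
    rw [intervalIntegral.integral_neg] at h0
    have hge : 0 ≤ f td - g td := by rw [hu td htd]; linarith
    exact hfgne (by linarith [hall td htd] : f td = g td)
  have hEpos : f t2 - g t2 < 0 := by
    by_contra h
    push_neg at h
    have hall : ∀ s ∈ Icc (0:ℝ) 1, 0 ≤ f s - g s := fun s hs => le_trans h (hmin' s hs)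
    have h0 : 0 ≤ ∫ s in (0:ℝ)..1, K td s * (w s * (f s - g s)) := by
      apply intervalIntegral.integral_nonneg h01
      intro s hs
      exact mul_nonneg (hKpos td htd s hs).le (mul_nonneg (hwnn s hs) (hall s hs))
    have hle : f td - g td ≤ 0 := by rw [hu td htd]; linarith
    exact hfgne (by linarith [hall td htd] : f td = g td)
  set D := f t1 - g t1 with hDdef
  set E := -(f t2 - g t2) with hEdef
  set N := max D E with hNdef
  have hNpos : 0 < N := lt_max_of_lt_left hDpos
  have hDN : D ≤ N := le_max_left _ _
  have hEN : E ≤ N := le_max_right _ _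
  -- the main estimate
  have hmain : D + E ≤ (M - m) * (((j:ℝ)+2) * (M*C)^(j+1)) * N := by
    have e1 := hu t1 ht1
    have e2 := hu t2 ht2
    have hsplit : (fun s => (K t2 s - K t1 s) * (w s * (f s - g s)))
        = fun s => (K t2 s * (w s * (f s - g s)) - K t1 s * (w s * (f s - g s))) :=
      funext fun s => by ring
    have hDE : D + E = ∫ s in (0:ℝ)..1, (K t2 s - K t1 s) * (w s * (f s - g s)) := by
      rw [hDdef, hEdef, e1, e2, hsplit,
        intervalIntegral.integral_sub (hInt (fun s => K t2 s * (w s * (f s - g s))) ((hKt t2 ht2).mul hwuc))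
          (hInt (fun s => K t1 s * (w s * (f s - g s))) ((hKt t1 ht1).mul hwuc))]
      ring
    rw [hDE]
    have hptw : ∀ s ∈ Icc (0:ℝ) 1, (K t2 s - K t1 s) * (w s * (f s - g s))
        ≤ (M - m) * ((((j:ℝ)+2) * (M*C)^(j+1)) * N) := by
      intro s hs
      have hKd : |K t2 s - K t1 s| ≤ M - m := abs_le.mpr
        ⟨by linarith [hKlb t2 ht2 s hs, hKub t1 ht1 s hs],
         by linarith [hKub t2 ht2 s hs, hKlb t1 ht1 s hs]⟩
      have hud : |f s - g s| ≤ N := abs_le.mpr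
        ⟨by linarith [hmin' s hs, hEN], by linarith [hmax' s hs, hDN]⟩
      have hcoefnn : (0:ℝ) ≤ ((j:ℝ)+2) * (M*C)^(j+1) := by positivity
      calc (K t2 s - K t1 s) * (w s * (f s - g s))
          ≤ |(K t2 s - K t1 s) * (w s * (f s - g s))| := le_abs_self _
        _ = |K t2 s - K t1 s| * (w s * |f s - g s|) := by
            rw [abs_mul, abs_mul, abs_of_nonneg (hwnn s hs)]
        _ ≤ (M - m) * ((((j:ℝ)+2) * (M*C)^(j+1)) * N) := by
            apply mul_le_mul hKd
              (mul_le_mul (hwub s hs) hud (abs_nonneg _) hcoefnn)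
              (mul_nonneg (hwnn s hs) (abs_nonneg _)) (by linarith)
    have hbd : (∫ s in (0:ℝ)..1, (K t2 s - K t1 s) * (w s * (f s - g s)))
        ≤ ∫ _ in (0:ℝ)..1, (M - m) * ((((j:ℝ)+2) * (M*C)^(j+1)) * N) := by
      apply intervalIntegral.integral_mono_on h01
        (hInt _ (((hKt t2 ht2).sub (hKt t1 ht1)).mul hwuc)) intervalIntegrable_const hptw
    calc (∫ s in (0:ℝ)..1, (K t2 s - K t1 s) * (w s * (f s - g s)))
        ≤ ∫ _ in (0:ℝ)..1, (M - m) * ((((j:ℝ)+2) * (M*C)^(j+1)) * N) := hbd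
      _ = (M - m) * (((j:ℝ)+2) * (M*C)^(j+1)) * N := by simp; ring
  -- the coefficient is < 1
  have hcoef : (M - m) * (((j:ℝ)+2) * (M*C)^(j+1)) < 1 := by
    push_cast at hcond
    have hmk : (0:ℝ) < m^(j+2) := by positivity
    have hMk : (0:ℝ) < M^(j+2) := by positivity
    rw [div_pow, div_pow, div_sub_div _ _ (ne_of_gt hmk) (ne_of_gt hMk),
      div_lt_div_iff₀ (by positivity) (by positivity)] at hcond
    have heM : M^(j+2) = M^(j+1) * M := by ring
    have hem : m^(j+2) = m^(j+1) * m := by ring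
    rw [heM, hem] at hcond
    rw [hem] at hCx
    rw [mul_pow]
    set a := m^(j+1) with hadef
    set b := M^(j+1) with hbdef
    set Q := C^(j+1) with hQdef
    have hapos : 0 < a := by rw [hadef]; positivity
    have hbpos : 0 < b := by rw [hbdef]; positivity
    have hQpos : 0 < Q := by rw [hQdef]; positivity
    have hab : a ≤ b := by
      rw [hadef, hbdef]; exact pow_le_pow_left₀ hmpos.le hmM _
    have hXpos : (0:ℝ) < (j:ℝ)+2 := by positivity
    -- key1 : ((j:ℝ)+2) * ((M-m)*b) < a*m
    have key1 : ((j:ℝ)+2) * ((M - m) * b) < a * m := by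
      have hmul : (((j:ℝ)+2) * ((M - m) * b)) * (b*M) < (a*m) * (b*M) := by
        have hineq : (a*(a*m)) * m ≤ (b*(b*M)) * m := by
          have : a*(a*m) ≤ b*(b*M) := by
            apply mul_le_mul hab (mul_le_mul hab hmM hmpos.le hbpos.le)
              (by positivity) hbpos.le
          exact mul_le_mul_of_nonneg_right this hmpos.le
        nlinarith [hcond, hineq, hXpos.le]
      exact lt_of_mul_lt_mul_right hmul (by positivity)
    have key2 : (((j:ℝ)+2) * ((M - m) * b)) * Q < (a*m) * Q :=
      mul_lt_mul_of_pos_right key1 hQpos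
    have hfin : (M - m) * (((j:ℝ)+2) * (b * Q)) = (((j:ℝ)+2) * ((M - m) * b)) * Q := by ring
    rw [hfin]
    calc (((j:ℝ)+2) * ((M - m) * b)) * Q < (a*m) * Q := key2
      _ = a * m * Q := by ring
      _ ≤ 1 := by linarith [hCx]
  -- conclusion
  have hNle : N ≤ D + E := max_le (by linarith) (by linarith)
  have hlt : (M - m) * (((j:ℝ)+2) * (M*C)^(j+1)) * N < 1 * N :=
    mul_lt_mul_of_pos_right hcoef hNpos
  linarith
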